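/- The group ⟨y, β | [β, y²] = 1, y⁻⁴β³ = 1, y⁻²β³ = 1⟩ is isomorphic to the free product Z₂ * Z₃. -/

import Mathlib

/-- `⟨y, β | [β, y²] = 1, y⁻⁴β³ = 1, y⁻²β³ = 1⟩`, generators `y = of 0`, `β = of 1`. -/
def relsStmt18 : Set (FreeGroup (Fin 2)) :=
  let y := FreeGroup.of (0 : Fin 2)
  let b := FreeGroup.of (1 : Fin 2)
  {b * y ^ 2 * b⁻¹ * (y ^ 2)⁻¹,
   (y ^ 4)⁻¹ * b ^ 3,
   (y ^ 2)⁻¹ * b ^ 3}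

namespace Stmt18Aux

abbrev G := PresentedGroup relsStmt18
abbrev Cp := Monoid.Coprod (Multiplicative (ZMod 2)) (Multiplicative (ZMod 3))

def Y : G := PresentedGroup.of 0
def B : G := PresentedGroup.of 1

lemma rel_one {r : FreeGroup (Fin 2)} (hr : r ∈ relsStmt18) :
    PresentedGroup.mk relsStmt18 r = 1 :=
  (QuotientGroup.eq_one_iff r).mpr (Subgroup.subset_normalClosure hr)

lemma h2 : Y ^ 4 = B ^ 3 := by
  have := rel_one (r := (FreeGroup.of (0:Fin 2) ^ 4)⁻¹ * FreeGroup.of (1:Fin 2) ^ 3)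
    (by simp [relsStmt18])
  simp only [map_mul, map_inv, map_pow] at this
  exact inv_mul_eq_one.mp this

lemma h3 : Y ^ 2 = B ^ 3 := by
  have := rel_one (r := (FreeGroup.of (0:Fin 2) ^ 2)⁻¹ * FreeGroup.of (1:Fin 2) ^ 3)
    (by simp [relsStmt18])
  simp only [map_mul, map_inv, map_pow] at this
  exact inv_mul_eq_one.mp this

lemma Ysq : Y ^ 2 = 1 := by
  have h : Y ^ 4 = Y ^ 2 := h2.trans h3.symm
  calc Y ^ 2 = Y ^ 4 * (Y ^ 2)⁻¹ := by group
    _ = 1 := by rw [h]; group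

lemma Bcube : B ^ 3 = 1 := by rw [← h3, Ysq]

def tf : Fin 2 → Cp := ![Monoid.Coprod.inl (Multiplicative.ofAdd 1),
  Monoid.Coprod.inr (Multiplicative.ofAdd 1)]

lemma tf_rel : ∀ r ∈ relsStmt18, FreeGroup.lift tf r = 1 := by
  have e2 : ((Multiplicative.ofAdd (1 : ZMod 2))) ^ 2 = 1 := by decide
  have e4 : ((Multiplicative.ofAdd (1 : ZMod 2))) ^ 4 = 1 := by decide
  have e3 : ((Multiplicative.ofAdd (1 : ZMod 3))) ^ 3 = 1 := by decide
  have ha2 : (Monoid.Coprod.inl (Multiplicative.ofAdd (1 : ZMod 2)) :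
      Cp) ^ 2 = 1 := by rw [← map_pow (Monoid.Coprod.inl : Multiplicative (ZMod 2) →* Cp), e2, map_one]
  have ha4 : (Monoid.Coprod.inl (Multiplicative.ofAdd (1 : ZMod 2)) :
      Cp) ^ 4 = 1 := by rw [← map_pow (Monoid.Coprod.inl : Multiplicative (ZMod 2) →* Cp), e4, map_one]
  have hb3 : (Monoid.Coprod.inr (Multiplicative.ofAdd (1 : ZMod 3)) :
      Cp) ^ 3 = 1 := by rw [← map_pow (Monoid.Coprod.inr : Multiplicative (ZMod 3) →* Cp), e3, map_one]
  intro r hr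
  rcases hr with h | h | h <;> subst h <;>
    simp only [map_mul, map_inv, map_pow, FreeGroup.lift_apply_of, tf,
      Matrix.cons_val_zero, Matrix.cons_val_one, Matrix.head_cons] <;>
    simp [ha2, ha4, hb3]

def f : G →* Cp := PresentedGroup.toGroup tf_rel

noncomputable def gOf {n : ℕ} [NeZero n] (x : G) (hx : x ^ n = 1) :
    Multiplicative (ZMod n) →* G :=
  AddMonoidHom.toMultiplicativeLeft
    (ZMod.lift n ⟨(zmultiplesHom (Additive G)) (Additive.ofMul x), by
      simp only [zmultiplesHom_apply, natCast_zsmul, ← ofMul_pow, hx, ofMul_one]⟩)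

lemma gOf_one {n : ℕ} [NeZero n] (x : G) (hx : x ^ n = 1) :
    gOf x hx (Multiplicative.ofAdd 1) = x := by
  unfold gOf
  rw [AddMonoidHom.coe_toMultiplicativeLeft]
  simp only [Function.comp_apply]
  rw [show ((Multiplicative.ofAdd (1 : ZMod n)).toAdd) = ((1 : ℤ) : ZMod n) from by simp]
  rw [ZMod.lift_coe]
  simp [zmultiplesHom]

noncomputable def g : Cp →* G := Monoid.Coprod.lift (gOf Y Ysq) (gOf B Bcube)

lemma gf : g.comp f = MonoidHom.id G := by
  apply PresentedGroup.ext
  intro x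
  fin_cases x <;> simp [f, g, tf]
  · exact gOf_one Y Ysq
  · exact gOf_one B Bcube

lemma hom_ext_zmod {n : ℕ} [NeZero n] {H : Type*} [Monoid H]
    {φ ψ : Multiplicative (ZMod n) →* H}
    (h : φ (Multiplicative.ofAdd 1) = ψ (Multiplicative.ofAdd 1)) : φ = ψ := by
  apply MonoidHom.ext; intro x
  have hx : x = (Multiplicative.ofAdd (1 : ZMod n)) ^ (x.toAdd.val) := by
    rw [← ofAdd_nsmul]
    rw [show (x.toAdd.val • (1 : ZMod n)) = ((x.toAdd.val : ZMod n)) from by simp]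
    rw [ZMod.natCast_rightInverse x.toAdd]
    simp
  rw [hx, map_pow, map_pow, h]

lemma fg : f.comp g = MonoidHom.id Cp := by
  apply Monoid.Coprod.hom_ext <;> apply hom_ext_zmod <;>
    simp [f, g, gOf_one, Y, B, tf]

theorem main : Nonempty (G ≃* Cp) := ⟨MonoidHom.toMulEquiv f g gf fg⟩

end Stmt18Aux

/-- The group `⟨y, β | [β, y²] = 1, y⁻⁴β³ = 1, y⁻²β³ = 1⟩` is isomorphic to `ℤ/2 ∗ ℤ/3`. -/
theorem stmt_18 :
    Nonempty (PresentedGroup relsStmt18 ≃*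
      Monoid.Coprod (Multiplicative (ZMod 2)) (Multiplicative (ZMod 3))) :=
  Stmt18Aux.main
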